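/- arXiv:1805.06967 — 3 statements merged into one kernel-verified Lean document; each statement's English description precedes it below -/
import Mathlib

section
/- Let p ≥ 2 be a real number and let n ≥ 1. For all vectors c, d in ℝⁿ (with the convention that ‖x‖^{p-2}x denotes the zero vector when x = 0), the inner product ⟨‖c‖^{p-2}c − ‖d‖^{p-2}d, c − d⟩ is at least (4/p²)·‖ ‖c‖^{(p-2)/2}c − ‖d‖^{(p-2)/2}d ‖². -/
open Real

set_option maxHeartbeats 1000000

private lemma rpow_mul_self {x y : ℝ} (hx : 0 ≤ x) (h : y + 1 ≠ 0) :
    x ^ y * x = x ^ (y + 1) := by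
  rw [Real.rpow_add' hx h, Real.rpow_one]

private lemma rpow_sq {x y : ℝ} (hx : 0 ≤ x) : (x ^ y) ^ 2 = x ^ (y * 2) := by
  rw [← Real.rpow_natCast (x ^ y) 2, ← Real.rpow_mul hx]
  norm_num

private lemma interp {C D t ab : ℝ} (h1 : -ab ≤ t) (h2 : t ≤ ab)
    (hE1 : 0 ≤ C + D * ab) (hE2 : 0 ≤ C - D * ab) : 0 ≤ C + D * t := by
  rcases le_total 0 D with h | h
  · nlinarith [mul_le_mul_of_nonneg_left h1 h]
  · nlinarith [mul_le_mul_of_nonpos_left h2 h]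

/-- Tangent-line inequality: for `0 ≤ b ≤ a` and `r ≥ 1`, `a^r - b^r ≤ r a^{r-1}(a-b)`. -/
private lemma tangent_rpow {r a b : ℝ} (hr : 1 ≤ r) (hb : 0 ≤ b) (hba : b ≤ a) :
    a ^ r - b ^ r ≤ r * a ^ (r - 1) * (a - b) := by
  rcases eq_or_lt_of_le (hb.trans hba) with h | ha
  · have hb0 : b = 0 := le_antisymm (h ▸ hba) hb
    simp [← h, hb0, Real.zero_rpow (by positivity : r ≠ 0)]
  · have hs : -1 ≤ b / a - 1 := by
      have : 0 ≤ b / a := div_nonneg hb ha.le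
      linarith
    have hber := one_add_mul_self_le_rpow_one_add hs hr
    have h1 : (1 + (b / a - 1)) = b / a := by ring
    rw [h1, Real.div_rpow hb ha.le] at hber
    have hA : a ^ (r - 1) * a = a ^ r := by
      rw [rpow_mul_self ha.le (by intro h'; nlinarith : r - 1 + 1 ≠ 0),
        show r - 1 + 1 = r by ring]
    have hApos : (0:ℝ) < a ^ r := Real.rpow_pos_of_pos ha r
    have hmul := mul_le_mul_of_nonneg_right hber hApos.le
    rw [div_mul_cancel₀ _ (ne_of_gt hApos)] at hmul
    have hdiv : b / a * a ^ r = b * a ^ (r - 1) := by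
      rw [← hA]; field_simp
    nlinarith [hmul, hA, hdiv]

/-- Key scalar inequality 1 (ordered case). -/
private lemma key1 {p a b : ℝ} (hp : 2 ≤ p) (hb : 0 ≤ b) (hba : b ≤ a) :
    4 / p ^ 2 * (a ^ (p / 2) - b ^ (p / 2)) ^ 2 ≤ (a ^ (p - 1) - b ^ (p - 1)) * (a - b) := by
  have ha : 0 ≤ a := hb.trans hba
  have hp0 : (0:ℝ) < p := by linarith
  have ht := tangent_rpow (r := p / 2) (by linarith) hb hba
  have hmono : b ^ (p / 2) ≤ a ^ (p / 2) := Real.rpow_le_rpow hb hba (by positivity)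
  have h0 : 0 ≤ a ^ (p / 2) - b ^ (p / 2) := by linarith
  have hsq : (a ^ (p / 2 - 1)) ^ 2 = a ^ (p - 2) := by
    rw [rpow_sq ha, show (p / 2 - 1) * 2 = p - 2 by ring]
  have hA : a ^ (p - 2) * a = a ^ (p - 1) := by
    rw [rpow_mul_self ha (by intro h'; nlinarith : p - 2 + 1 ≠ 0),
      show p - 2 + 1 = p - 1 by ring]
  have hB : b ^ (p - 2) * b = b ^ (p - 1) := by
    rw [rpow_mul_self hb (by intro h'; nlinarith : p - 2 + 1 ≠ 0),
      show p - 2 + 1 = p - 1 by ring]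
  have hbpa : b ^ (p - 2) ≤ a ^ (p - 2) := Real.rpow_le_rpow hb hba (by linarith)
  have hstep : a ^ (p - 2) * (a - b) ≤ a ^ (p - 1) - b ^ (p - 1) := by
    rw [← hA, ← hB]; nlinarith
  have hsq2 : (a ^ (p / 2) - b ^ (p / 2)) ^ 2 ≤ (p / 2 * a ^ (p / 2 - 1) * (a - b)) ^ 2 := by
    apply sq_le_sq' _ ht
    nlinarith [Real.rpow_nonneg ha (p / 2 - 1), sub_nonneg.2 hba, h0]
  have hexp : (p / 2 * a ^ (p / 2 - 1) * (a - b)) ^ 2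
      = p ^ 2 / 4 * (a ^ (p - 2) * (a - b) ^ 2) := by
    rw [← hsq]; ring
  have hfin : a ^ (p - 2) * (a - b) ^ 2 ≤ (a ^ (p - 1) - b ^ (p - 1)) * (a - b) := by
    have := mul_le_mul_of_nonneg_right hstep (sub_nonneg.2 hba)
    nlinarith [this]
  rw [div_mul_eq_mul_div, div_le_iff₀ (by positivity)]
  calc 4 * (a ^ (p / 2) - b ^ (p / 2)) ^ 2
      ≤ 4 * (p ^ 2 / 4 * (a ^ (p - 2) * (a - b) ^ 2)) := by
        rw [← hexp]; nlinarith [hsq2]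
    _ = (a ^ (p - 2) * (a - b) ^ 2) * p ^ 2 := by ring
    _ ≤ (a ^ (p - 1) - b ^ (p - 1)) * (a - b) * p ^ 2 := by nlinarith [hfin]

/-- Key scalar inequality 2 (AM-GM cross term). -/
private lemma key2 {p a b : ℝ} (hp : 2 ≤ p) (ha : 0 ≤ a) (hb : 0 ≤ b) :
    2 * (a ^ (p / 2) * b ^ (p / 2)) ≤ a ^ (p - 1) * b + a * b ^ (p - 1) := by
  set u := a ^ ((p - 1) / 2) * b ^ ((1:ℝ) / 2) with hu
  set v := a ^ ((1:ℝ) / 2) * b ^ ((p - 1) / 2) with hv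
  have h2 : ∀ x : ℝ, 0 ≤ x → (x ^ ((p - 1) / 2)) ^ 2 = x ^ (p - 1) := by
    intro x hx
    rw [rpow_sq hx, show (p - 1) / 2 * 2 = p - 1 by ring]
  have h3 : ∀ x : ℝ, 0 ≤ x → (x ^ ((1:ℝ) / 2)) ^ 2 = x := by
    intro x hx
    rw [rpow_sq hx, show (1:ℝ) / 2 * 2 = 1 by ring, Real.rpow_one]
  have huv : u * v = a ^ (p / 2) * b ^ (p / 2) := by
    rw [hu, hv]
    have hap : a ^ ((p - 1) / 2) * a ^ ((1:ℝ) / 2) = a ^ (p / 2) := by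
      rw [← Real.rpow_add' ha (by intro h; nlinarith : (p - 1) / 2 + 1 / 2 ≠ 0),
        show (p - 1) / 2 + 1 / 2 = p / 2 by ring]
    have hbp : b ^ ((1:ℝ) / 2) * b ^ ((p - 1) / 2) = b ^ (p / 2) := by
      rw [← Real.rpow_add' hb (by intro h; nlinarith : (1:ℝ) / 2 + (p - 1) / 2 ≠ 0),
        show (1:ℝ) / 2 + (p - 1) / 2 = p / 2 by ring]
    calc a ^ ((p - 1) / 2) * b ^ ((1:ℝ) / 2) * (a ^ ((1:ℝ) / 2) * b ^ ((p - 1) / 2))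
        = (a ^ ((p - 1) / 2) * a ^ ((1:ℝ) / 2)) * (b ^ ((1:ℝ) / 2) * b ^ ((p - 1) / 2)) := by ring
      _ = a ^ (p / 2) * b ^ (p / 2) := by rw [hap, hbp]
  have hu2 : u ^ 2 = a ^ (p - 1) * b := by
    rw [hu, mul_pow, h2 a ha, h3 b hb]
  have hv2 : v ^ 2 = a * b ^ (p - 1) := by
    rw [hv, mul_pow, h2 b hb, h3 a ha]
  have hmain := two_mul_le_add_sq u v
  rw [hu2, hv2] at hmain
  calc 2 * (a ^ (p / 2) * b ^ (p / 2)) = 2 * u * v := by rw [← huv]; ring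
    _ ≤ a ^ (p - 1) * b + a * b ^ (p - 1) := hmain

/-- Lindqvist's first algebraic vector inequality: for `p ≥ 2` and vectors `c, d` in `ℝⁿ`
(with `‖x‖^{p-2} x` understood as `0` when `x = 0`, which is automatic here since the
scalar multiplies the zero vector),
`⟨‖c‖^{p-2}c − ‖d‖^{p-2}d, c − d⟩ ≥ (4/p²) ‖ ‖c‖^{(p-2)/2}c − ‖d‖^{(p-2)/2}d ‖²`. -/
theorem lindqvist_ineq_of_two_le
    (p : ℝ) (hp : 2 ≤ p) (n : ℕ) (hn : 1 ≤ n)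
    (c d : EuclideanSpace ℝ (Fin n)) :
    (4 / p ^ 2) * ‖(‖c‖ ^ ((p - 2) / 2)) • c - (‖d‖ ^ ((p - 2) / 2)) • d‖ ^ 2 ≤
      (inner ℝ ((‖c‖ ^ (p - 2)) • c - (‖d‖ ^ (p - 2)) • d) (c - d) : ℝ) := by
  set a := ‖c‖ with ha'
  set b := ‖d‖ with hb'
  have ha : 0 ≤ a := norm_nonneg c
  have hb : 0 ≤ b := norm_nonneg d
  have hp0 : (0:ℝ) < p := by linarith
  set t : ℝ := inner ℝ c d with htdef
  have hcs : |t| ≤ a * b := abs_real_inner_le_norm c d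
  have hts : (inner ℝ d c : ℝ) = t := by rw [htdef]; exact (real_inner_comm d c).symm
  have hR : (inner ℝ ((a ^ (p - 2)) • c - (b ^ (p - 2)) • d) (c - d) : ℝ)
      = a ^ (p - 2) * a ^ 2 + b ^ (p - 2) * b ^ 2 - (a ^ (p - 2) + b ^ (p - 2)) * t := by
    simp only [inner_sub_left, inner_sub_right, real_inner_smul_left]
    simp only [real_inner_self_eq_norm_sq, hts, ← htdef, ← ha', ← hb']
    ring
  have hL : ‖(a ^ ((p - 2) / 2)) • c - (b ^ ((p - 2) / 2)) • d‖ ^ 2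
      = (a ^ ((p - 2) / 2)) ^ 2 * a ^ 2 + (b ^ ((p - 2) / 2)) ^ 2 * b ^ 2
        - 2 * (a ^ ((p - 2) / 2) * b ^ ((p - 2) / 2)) * t := by
    rw [← real_inner_self_eq_norm_sq]
    simp only [inner_sub_left, inner_sub_right, real_inner_smul_left, real_inner_smul_right]
    simp only [real_inner_self_eq_norm_sq, hts, ← htdef, ← ha', ← hb']
    ring
  rw [hR, hL]
  have pow_p : ∀ x : ℝ, 0 ≤ x → x ^ (p - 2) * x ^ 2 = x ^ p := by
    intro x hx
    rw [sq, ← mul_assoc, rpow_mul_self hx (by intro h; nlinarith : p - 2 + 1 ≠ 0),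
      rpow_mul_self hx (by intro h; nlinarith : p - 2 + 1 + 1 ≠ 0),
      show p - 2 + 1 + 1 = p by ring]
  have pow_half : ∀ x : ℝ, 0 ≤ x → (x ^ ((p - 2) / 2)) ^ 2 = x ^ (p - 2) := by
    intro x hx
    rw [rpow_sq hx, show (p - 2) / 2 * 2 = p - 2 by ring]
  have pow_half1 : ∀ x : ℝ, 0 ≤ x → x ^ ((p - 2) / 2) * x = x ^ (p / 2) := by
    intro x hx
    rw [rpow_mul_self hx (by intro h; nlinarith : (p - 2) / 2 + 1 ≠ 0),
      show (p - 2) / 2 + 1 = p / 2 by ring]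
  have pow_p1 : ∀ x : ℝ, 0 ≤ x → x ^ (p - 2) * x = x ^ (p - 1) := by
    intro x hx
    rw [rpow_mul_self hx (by intro h; nlinarith : p - 2 + 1 ≠ 0),
      show p - 2 + 1 = p - 1 by ring]
  have pow_p2 : ∀ x : ℝ, 0 ≤ x → (x ^ (p / 2)) ^ 2 = x ^ p := by
    intro x hx
    rw [rpow_sq hx, show p / 2 * 2 = p by ring]
  have pow_p3 : ∀ x : ℝ, 0 ≤ x → x ^ (p - 1) * x = x ^ p := by
    intro x hx
    rw [rpow_mul_self hx (by intro h; nlinarith : p - 1 + 1 ≠ 0),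
      show p - 1 + 1 = p by ring]
  have h1 : (a ^ ((p - 2) / 2)) ^ 2 * a ^ 2 = a ^ p := by
    rw [pow_half a ha]; exact pow_p a ha
  have h2 : (b ^ ((p - 2) / 2)) ^ 2 * b ^ 2 = b ^ p := by
    rw [pow_half b hb]; exact pow_p b hb
  rw [h1, h2, pow_p a ha, pow_p b hb]
  set m := a ^ ((p - 2) / 2) * b ^ ((p - 2) / 2) with hm
  have hmab : m * (a * b) = a ^ (p / 2) * b ^ (p / 2) := by
    rw [hm]
    calc a ^ ((p - 2) / 2) * b ^ ((p - 2) / 2) * (a * b)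
        = (a ^ ((p - 2) / 2) * a) * (b ^ ((p - 2) / 2) * b) := by ring
      _ = a ^ (p / 2) * b ^ (p / 2) := by rw [pow_half1 a ha, pow_half1 b hb]
  have key1' : ∀ x y : ℝ, 0 ≤ x → 0 ≤ y →
      4 / p ^ 2 * (x ^ (p / 2) - y ^ (p / 2)) ^ 2 ≤ (x ^ (p - 1) - y ^ (p - 1)) * (x - y) := by
    intro x y hx hy
    rcases le_total y x with h | h
    · exact key1 hp hy h
    · have hkk := key1 hp hx h
      have e1 : (x ^ (p / 2) - y ^ (p / 2)) ^ 2 = (y ^ (p / 2) - x ^ (p / 2)) ^ 2 := by ring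
      have e2 : (x ^ (p - 1) - y ^ (p - 1)) * (x - y)
          = (y ^ (p - 1) - x ^ (p - 1)) * (y - x) := by ring
      rw [e1, e2]; exact hkk
  have E1 : 4 / p ^ 2 * (a ^ p - 2 * (m * (a * b)) + b ^ p)
      ≤ a ^ p + b ^ p - (a ^ (p - 1) * b + a * b ^ (p - 1)) := by
    rw [hmab]
    have hk := key1' a b ha hb
    have ea : (a ^ (p / 2) - b ^ (p / 2)) ^ 2
        = a ^ p - 2 * (a ^ (p / 2) * b ^ (p / 2)) + b ^ p := by
      rw [← pow_p2 a ha, ← pow_p2 b hb]; ring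
    have eb : (a ^ (p - 1) - b ^ (p - 1)) * (a - b)
        = a ^ p + b ^ p - (a ^ (p - 1) * b + a * b ^ (p - 1)) := by
      rw [← pow_p3 a ha, ← pow_p3 b hb]; ring
    rw [← ea, ← eb]; exact hk
  have E2 : 4 / p ^ 2 * (a ^ p + 2 * (m * (a * b)) + b ^ p)
      ≤ a ^ p + b ^ p + (a ^ (p - 1) * b + a * b ^ (p - 1)) := by
    rw [hmab]
    have hk2 := key2 hp ha hb
    have hXeq : a ^ p + 2 * (a ^ (p / 2) * b ^ (p / 2)) + b ^ p
        = (a ^ (p / 2) + b ^ (p / 2)) ^ 2 := by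
      rw [← pow_p2 a ha, ← pow_p2 b hb]; ring
    have hX : 0 ≤ a ^ p + 2 * (a ^ (p / 2) * b ^ (p / 2)) + b ^ p := by
      rw [hXeq]; positivity
    have hcoef : 4 / p ^ 2 ≤ 1 := by
      rw [div_le_one (by positivity)]; nlinarith
    nlinarith [hX, hk2, mul_le_mul_of_nonneg_right hcoef hX]
  have ht1 : t ≤ a * b := (abs_le.mp hcs).2
  have ht2 : -(a * b) ≤ t := (abs_le.mp hcs).1
  have hab1 : (a ^ (p - 2) + b ^ (p - 2)) * (a * b)
      = a ^ (p - 1) * b + a * b ^ (p - 1) := by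
    rw [← pow_p1 a ha, ← pow_p1 b hb]; ring
  set D : ℝ := 4 / p ^ 2 * (2 * m) - (a ^ (p - 2) + b ^ (p - 2)) with hD
  have hE1' : 0 ≤ (1 - 4 / p ^ 2) * (a ^ p + b ^ p) + D * (a * b) := by
    rw [hD]; nlinarith [E1, hab1]
  have hE2' : 0 ≤ (1 - 4 / p ^ 2) * (a ^ p + b ^ p) - D * (a * b) := by
    rw [hD]; nlinarith [E2, hab1]
  have hgoal : 0 ≤ (1 - 4 / p ^ 2) * (a ^ p + b ^ p) + D * t :=
    interp ht2 ht1 hE1' hE2'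
  rw [hD] at hgoal
  nlinarith [hgoal]
end

section
/- Let 1 < p ≤ 2 and let n ≥ 1. For all vectors c, d in ℝⁿ (with the convention that ‖x‖^{p-2}x denotes the zero vector when x = 0), the inner product ⟨‖c‖^{p-2}c − ‖d‖^{p-2}d, c − d⟩ is at least (p−1)·‖c − d‖²·(1 + ‖c‖² + ‖d‖²)^{(p-2)/2}. -/
private lemma rp_mul (p : ℝ) (hp1 : 1 < p) (hp2 : p < 2) {x : ℝ} (hx : 0 ≤ x) :
    x ^ (p - 2) * x = x ^ (p - 1) := by
  rcases eq_or_lt_of_le hx with rfl | h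
  · simp [Real.zero_rpow (show p - 2 ≠ 0 by intro h; linarith),
      Real.zero_rpow (show p - 1 ≠ 0 by intro h; linarith)]
  · rw [show p - 1 = (p - 2) + 1 by ring, Real.rpow_add_one h.ne']

private lemma rpM_le (p : ℝ) (hp2 : p < 2) {a b x : ℝ} (hx : 0 < x) (hb : 0 ≤ b)
    (hxa : x ≤ a) :
    (1 + a ^ 2 + b ^ 2) ^ ((p - 2) / 2) ≤ x ^ (p - 2) := by
  have h1 : (1 + a ^ 2 + b ^ 2) ^ ((p - 2) / 2) ≤ (x ^ 2 : ℝ) ^ ((p - 2) / 2) :=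
    Real.rpow_le_rpow_of_nonpos (by positivity) (by nlinarith) (by linarith)
  have h2 : ((x ^ 2 : ℝ)) ^ ((p - 2) / 2) = x ^ (p - 2) := by
    rw [← Real.rpow_natCast x 2, ← Real.rpow_mul hx.le,
      show ((2:ℕ):ℝ) * ((p - 2) / 2) = p - 2 by push_cast; ring]
  linarith [h1, h2.le, h2.ge]

/-- concavity step: `b^(p-1) ≤ a^(p-1) + (p-1) a^(p-2) (b-a)` for `0 ≤ b ≤ a`, `1 < p < 2`. -/
private lemma conc (p : ℝ) (hp1 : 1 < p) (hp2 : p < 2) {a b : ℝ} (hb : 0 ≤ b) (hba : b ≤ a)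
    (ha : 0 < a) :
    b ^ (p - 1) ≤ a ^ (p - 1) + (p - 1) * (a ^ (p - 2) * (b - a)) := by
  have hx : (0:ℝ) ≤ b / a := by positivity
  have hbern := rpow_one_add_le_one_add_mul_self (s := b / a - 1)
    (by linarith) (by linarith : (0:ℝ) ≤ p - 1) (by linarith : p - 1 ≤ 1)
  rw [show (1 : ℝ) + (b / a - 1) = b / a by ring] at hbern
  have hd : (b / a) ^ (p - 1) = b ^ (p - 1) / a ^ (p - 1) := Real.div_rpow hb ha.le (p - 1)
  have hap : (0:ℝ) < a ^ (p - 1) := Real.rpow_pos_of_pos ha _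
  rw [hd, div_le_iff₀ hap] at hbern
  have hsub : a ^ (p - 2) = a ^ (p - 1) / a := by
    rw [show p - 2 = (p - 1) - 1 by ring, Real.rpow_sub_one ha.ne']
  calc b ^ (p - 1) ≤ (1 + (p - 1) * (b / a - 1)) * a ^ (p - 1) := hbern
    _ = a ^ (p - 1) + (p - 1) * ((a ^ (p - 1) / a) * (b - a)) := by field_simp
    _ = a ^ (p - 1) + (p - 1) * (a ^ (p - 2) * (b - a)) := by rw [← hsub]

/-- endpoint `t = ab`. -/
private lemma e1 (p : ℝ) (hp1 : 1 < p) (hp2 : p < 2) {a b : ℝ} (hb : 0 ≤ b) (hba : b ≤ a) :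
    (p - 1) * (a - b) ^ 2 * (1 + a ^ 2 + b ^ 2) ^ ((p - 2) / 2) ≤
      (a - b) * (a ^ (p - 2) * a - b ^ (p - 2) * b) := by
  rcases eq_or_lt_of_le hba with rfl | hlt
  · simp
  · have ha : 0 < a := lt_of_le_of_lt hb hlt
    have hM : (1 + a ^ 2 + b ^ 2) ^ ((p - 2) / 2) ≤ a ^ (p - 2) := rpM_le p hp2 ha hb le_rfl
    have hc := conc p hp1 hp2 hb hba ha
    rw [rp_mul p hp1 hp2 ha.le, rp_mul p hp1 hp2 hb]
    -- (p-1)(a-b)^2 M ≤ (p-1)(a-b)^2 a^(p-2) ≤ (a-b)(a^(p-1) - b^(p-1))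
    have h1 : (p - 1) * (a - b) ^ 2 * (1 + a ^ 2 + b ^ 2) ^ ((p - 2) / 2) ≤
        (p - 1) * (a - b) ^ 2 * a ^ (p - 2) :=
      mul_le_mul_of_nonneg_left hM (by nlinarith [sq_nonneg (a-b)])
    nlinarith [mul_le_mul_of_nonneg_left hc (le_of_lt (sub_pos.mpr hlt))]

/-- endpoint `t = -ab`. -/
private lemma e2 (p : ℝ) (hp1 : 1 < p) (hp2 : p < 2) {a b : ℝ} (ha : 0 ≤ a) (hb : 0 ≤ b) :
    (p - 1) * (a + b) ^ 2 * (1 + a ^ 2 + b ^ 2) ^ ((p - 2) / 2) ≤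
      (a + b) * (a ^ (p - 2) * a + b ^ (p - 2) * b) := by
  set M := (1 + a ^ 2 + b ^ 2) ^ ((p - 2) / 2) with hMdef
  have hM0 : 0 ≤ M := Real.rpow_nonneg (by positivity) _
  have haM : a * M ≤ a ^ (p - 2) * a := by
    rcases eq_or_lt_of_le ha with rfl | h
    · simp
    · have := rpM_le p hp2 h hb le_rfl
      nlinarith
  have hbM : b * M ≤ b ^ (p - 2) * b := by
    rcases eq_or_lt_of_le hb with rfl | h
    · simp
    · have : (1 + a ^ 2 + b ^ 2) ^ ((p - 2) / 2) ≤ b ^ (p - 2) := by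
        have h1 : (1 + a ^ 2 + b ^ 2) ^ ((p - 2) / 2) ≤ ((b:ℝ) ^ 2) ^ ((p - 2) / 2) :=
          Real.rpow_le_rpow_of_nonpos (by positivity) (by nlinarith) (by linarith)
        have h2 : ((b:ℝ) ^ 2) ^ ((p - 2) / 2) = b ^ (p - 2) := by
          rw [← Real.rpow_natCast b 2, ← Real.rpow_mul h.le,
            show ((2:ℕ):ℝ) * ((p - 2) / 2) = p - 2 by push_cast; ring]
        linarith
      nlinarith
  -- (p-1)(a+b)^2 M ≤ (a+b)^2 M = (a+b)(aM + bM) ≤ (a+b)(A a + B b)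
  have h1 : (p - 1) * ((a + b) ^ 2 * M) ≤ 1 * ((a + b) ^ 2 * M) :=
    mul_le_mul_of_nonneg_right (by linarith) (by positivity)
  nlinarith [mul_le_mul_of_nonneg_left (add_le_add haM hbM) (by positivity : (0:ℝ) ≤ a + b)]

private lemma lind_scalar (p : ℝ) (hp1 : 1 < p) (hp2 : p < 2) (a b t : ℝ)
    (ha : 0 ≤ a) (hb : 0 ≤ b) (h1 : t ≤ a * b) (h2 : -(a * b) ≤ t) :
    (p - 1) * (a ^ 2 + b ^ 2 - 2 * t) * (1 + a ^ 2 + b ^ 2) ^ ((p - 2) / 2) ≤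
      a ^ (p - 2) * a ^ 2 + b ^ (p - 2) * b ^ 2 - (a ^ (p - 2) + b ^ (p - 2)) * t := by
  set M := (1 + a ^ 2 + b ^ 2) ^ ((p - 2) / 2) with hMdef
  have f1 : 0 ≤ (a - b) * (a ^ (p - 2) * a - b ^ (p - 2) * b) - (p - 1) * (a - b) ^ 2 * M := by
    rcases le_total b a with hba | hab
    · linarith [e1 p hp1 hp2 hb hba]
    · have := e1 p hp1 hp2 ha hab
      rw [show (1 + b ^ 2 + a ^ 2 : ℝ) = 1 + a ^ 2 + b ^ 2 by ring] at this
      rw [← hMdef] at this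
      nlinarith [this]
  have f2 : 0 ≤ (a + b) * (a ^ (p - 2) * a + b ^ (p - 2) * b) - (p - 1) * (a + b) ^ 2 * M :=
    sub_nonneg.mpr (e2 p hp1 hp2 ha hb)
  rcases eq_or_lt_of_le (mul_nonneg ha hb) with hab | hab
  · obtain rfl : t = 0 := le_antisymm (by linarith [hab.symm ▸ h1]) (by nlinarith)
    nlinarith [f1, f2]
  · have key : 0 ≤ (a * b - t) * ((a + b) * (a ^ (p - 2) * a + b ^ (p - 2) * b)
        - (p - 1) * (a + b) ^ 2 * M)
        + (a * b + t) * ((a - b) * (a ^ (p - 2) * a - b ^ (p - 2) * b)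
        - (p - 1) * (a - b) ^ 2 * M) :=
      add_nonneg (mul_nonneg (by linarith) f2) (mul_nonneg (by linarith) f1)
    nlinarith [key, hab]

/-- Lindqvist's second algebraic vector inequality: for `1 < p ≤ 2` and vectors `c, d` in `ℝⁿ`
(with `‖x‖^{p-2} x` understood as `0` when `x = 0`, which is automatic here since
`0 ^ (p-2) = 0` for `p < 2` in `Real.rpow` and the scalar multiplies the zero vector for `p = 2`),
`⟨‖c‖^{p-2}c − ‖d‖^{p-2}d, c − d⟩ ≥ (p−1) ‖c − d‖² (1 + ‖c‖² + ‖d‖²)^{(p-2)/2}`. -/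
theorem lindqvist_ineq_of_le_two
    (p : ℝ) (hp1 : 1 < p) (hp2 : p ≤ 2) (n : ℕ) (hn : 1 ≤ n)
    (c d : EuclideanSpace ℝ (Fin n)) :
    (p - 1) * ‖c - d‖ ^ 2 * (1 + ‖c‖ ^ 2 + ‖d‖ ^ 2) ^ ((p - 2) / 2) ≤
      (inner ℝ ((‖c‖ ^ (p - 2)) • c - (‖d‖ ^ (p - 2)) • d) (c - d) : ℝ) := by
  rcases eq_or_lt_of_le hp2 with rfl | hlt
  · simp only [show (2:ℝ) - 2 = 0 by norm_num, zero_div, Real.rpow_zero, one_smul, mul_one,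
      show (2:ℝ) - 1 = 1 by norm_num, one_mul]
    rw [real_inner_self_eq_norm_sq]
  · have hct : (inner ℝ ((‖c‖ ^ (p - 2)) • c - (‖d‖ ^ (p - 2)) • d) (c - d) : ℝ) =
        ‖c‖ ^ (p - 2) * ‖c‖ ^ 2 + ‖d‖ ^ (p - 2) * ‖d‖ ^ 2
          - (‖c‖ ^ (p - 2) + ‖d‖ ^ (p - 2)) * (inner ℝ c d : ℝ) := by
      simp only [inner_sub_left, inner_sub_right, real_inner_smul_left,
        real_inner_self_eq_norm_sq, real_inner_comm d c]
      ring
    have hnorm : ‖c - d‖ ^ 2 = ‖c‖ ^ 2 + ‖d‖ ^ 2 - 2 * (inner ℝ c d : ℝ) := by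
      rw [@norm_sub_sq_real]; ring
    rw [hct, hnorm]
    have habs := abs_real_inner_le_norm c d
    rw [abs_le] at habs
    exact lind_scalar p hp1 hlt ‖c‖ ‖d‖ _ (norm_nonneg c) (norm_nonneg d)
      habs.2 (by linarith [habs.1])
end

section
/- Let p, q, β, ε, r′, N₁ be real numbers with 1 < p < q < β + 1, 0 < ε < 1, r′ ≥ 0, and N₁ ≥ 1. Set σ = 1/((q−p)(r′+1)), A = (p−1)σ^{p} + ((N₁−1)/ε) σ^{p−1}, and L = max{ (2e)^{1/(β+1−q)}, (2A)^{1/(β+1−p)} }. Then A + L^{q−p} e^{(q−p)σ(r′+1)} ≤ L^{β+1−p}. -/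
/-- The elementary inequality behind the barrier construction in the case `q > p`:
with `σ = 1/((q−p)(r′+1))`, `A = (p−1)σᵖ + ((N₁−1)/ε)σ^{p−1}`, and
`L = max{(2e)^{1/(β+1−q)}, (2A)^{1/(β+1−p)}}`, one has
`A + L^{q−p} e^{(q−p)σ(r′+1)} ≤ L^{β+1−p}`. -/
theorem barrier_ineq_q_gt_p (p q β ε r' N₁ : ℝ)
    (hp : 1 < p) (hpq : p < q) (hq : q < β + 1)
    (hε0 : 0 < ε) (hε1 : ε < 1) (hr' : 0 ≤ r') (hN₁ : 1 ≤ N₁) :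
    let σ : ℝ := 1 / ((q - p) * (r' + 1))
    let A : ℝ := (p - 1) * σ ^ p + ((N₁ - 1) / ε) * σ ^ (p - 1)
    let L : ℝ := max ((2 * Real.exp 1) ^ (1 / (β + 1 - q))) ((2 * A) ^ (1 / (β + 1 - p)))
    A + L ^ (q - p) * Real.exp ((q - p) * σ * (r' + 1)) ≤ L ^ (β + 1 - p) := by
  intro σ A L
  have hqp : (0:ℝ) < q - p := by linarith
  have hr1 : (0:ℝ) < r' + 1 := by linarith
  have hc : (0:ℝ) < β + 1 - q := by linarith
  have hbp : (0:ℝ) < β + 1 - p := by linarith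
  have hσ : 0 < σ := by
    unfold σ; positivity
  have hA : 0 < A := by
    unfold A
    have h1 : 0 < (p - 1) * σ ^ p :=
      mul_pos (by linarith) (Real.rpow_pos_of_pos hσ p)
    have h2 : 0 ≤ ((N₁ - 1) / ε) * σ ^ (p - 1) :=
      mul_nonneg (div_nonneg (by linarith) hε0.le) (Real.rpow_pos_of_pos hσ _).le
    linarith
  have h2e : (0:ℝ) < 2 * Real.exp 1 := by positivity
  have hL0 : 0 < L :=
    lt_of_lt_of_le (Real.rpow_pos_of_pos h2e _) (le_max_left _ _)
  have h1 : 2 * Real.exp 1 ≤ L ^ (β + 1 - q) := by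
    calc 2 * Real.exp 1
        = ((2 * Real.exp 1) ^ (1 / (β + 1 - q))) ^ (β + 1 - q) := by
          rw [← Real.rpow_mul h2e.le, one_div, inv_mul_cancel₀ hc.ne', Real.rpow_one]
      _ ≤ L ^ (β + 1 - q) :=
          Real.rpow_le_rpow (Real.rpow_nonneg h2e.le _) (le_max_left _ _) hc.le
  have h2 : 2 * A ≤ L ^ (β + 1 - p) := by
    have h2A : (0:ℝ) < 2 * A := by linarith
    calc 2 * A
        = ((2 * A) ^ (1 / (β + 1 - p))) ^ (β + 1 - p) := by
          rw [← Real.rpow_mul h2A.le, one_div, inv_mul_cancel₀ hbp.ne', Real.rpow_one]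
      _ ≤ L ^ (β + 1 - p) :=
          Real.rpow_le_rpow (Real.rpow_nonneg h2A.le _) (le_max_right _ _) hbp.le
  have hexp : (q - p) * σ * (r' + 1) = 1 := by
    unfold σ; field_simp
  rw [hexp]
  have hsplit : L ^ (q - p) * L ^ (β + 1 - q) = L ^ (β + 1 - p) := by
    rw [← Real.rpow_add hL0]; ring_nf
  have hLqp : 0 < L ^ (q - p) := Real.rpow_pos_of_pos hL0 _
  have key : L ^ (q - p) * (2 * Real.exp 1) ≤ L ^ (β + 1 - p) := by
    calc L ^ (q - p) * (2 * Real.exp 1) ≤ L ^ (q - p) * L ^ (β + 1 - q) :=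
          mul_le_mul_of_nonneg_left h1 hLqp.le
      _ = L ^ (β + 1 - p) := hsplit
  nlinarith [Real.exp_pos 1]
end
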